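/- Let A be an m×n dual complex matrix and N_A an NDMPI of A. If X is an n×m dual complex matrix satisfying A·X·A = A·N_A·A, X·A·X = X, and (A·X)* = A·X (i.e., X is a {1,2,3}-inverse of A), then A·X = A·N_A. -/

import Mathlib

open Matrix

/-- The dual complex numbers ℂ[ε] with ε² = 0 (dual numbers over ℂ). -/
abbrev DualComplex := DualNumber ℂ

/-- Conjugation on dual complex numbers: star (a + b·ε) = (conj a) + (conj b)·ε. -/
noncomputable instance : StarRing DualComplex where
  star x := ⟨star x.fst, star x.snd⟩
  star_involutive x := TrivSqZeroExt.ext (star_star x.fst) (star_star x.snd)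
  star_mul x y := TrivSqZeroExt.ext
    (by simp [TrivSqZeroExt.fst_mul, mul_comm]; exact mul_comm _ _)
    (by simp [TrivSqZeroExt.snd_mul]; exact Eq.trans (b := star y.fst * star x.snd + star y.snd * star x.fst) (by simp; ring) rfl)
  star_add x y := TrivSqZeroExt.ext (by simp; rfl) (by simp; rfl)

/-- `X` is a new dual Moore–Penrose inverse (NDMPI) of `M`:
`M*·M·X·M·M* = M*·M·M*`, `X·M·X = X`, `(M·X)* = M·X`, `(X·M)* = X·M`. -/
def IsNDMPI {m n : ℕ} (M : Matrix (Fin m) (Fin n) DualComplex)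
    (X : Matrix (Fin n) (Fin m) DualComplex) : Prop :=
  Mᴴ * M * X * M * Mᴴ = Mᴴ * M * Mᴴ ∧
  X * M * X = X ∧
  (M * X)ᴴ = M * X ∧
  (X * M)ᴴ = X * M

/-- If `X` is a {1,2,3}-inverse of `A` (i.e. `A·X·A = A_e`, `X·A·X = X`,
`(A·X)* = A·X`), then `A·X = A·N_A`. -/
theorem stmt_12 {m n : ℕ} (A : Matrix (Fin m) (Fin n) DualComplex)
    (NA : Matrix (Fin n) (Fin m) DualComplex) (hNA : IsNDMPI A NA)
    (X : Matrix (Fin n) (Fin m) DualComplex)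
    (h1 : A * X * A = A * NA * A)
    (h2 : X * A * X = X)
    (h3 : (A * X)ᴴ = A * X) :
    A * X = A * NA := by
  obtain ⟨_, hNA2, hNA3, _⟩ := hNA
  have key : Aᴴ * (A * X) = Aᴴ * (A * NA) := by
    have h := congrArg conjTranspose h1
    simp only [conjTranspose_mul] at h
    calc Aᴴ * (A * X) = Aᴴ * (A * X)ᴴ := by rw [h3]
      _ = Aᴴ * (Xᴴ * Aᴴ) := by rw [conjTranspose_mul]
      _ = Aᴴ * (NAᴴ * Aᴴ) := h
      _ = Aᴴ * (A * NA)ᴴ := by rw [conjTranspose_mul]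
      _ = Aᴴ * (A * NA) := by rw [hNA3]
  calc A * X = A * (X * A * X) := by rw [h2]
    _ = (A * X) * (A * X) := by simp only [Matrix.mul_assoc]
    _ = (A * X)ᴴ * (A * X) := by rw [h3]
    _ = Xᴴ * (Aᴴ * (A * X)) := by rw [conjTranspose_mul, Matrix.mul_assoc]
    _ = Xᴴ * (Aᴴ * (A * NA)) := by rw [key]
    _ = (A * X)ᴴ * (A * NA) := by rw [conjTranspose_mul, Matrix.mul_assoc]
    _ = (A * X) * (A * NA) := by rw [h3]
    _ = (A * X * A) * NA := by simp only [Matrix.mul_assoc]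
    _ = (A * NA * A) * NA := by rw [h1]
    _ = A * (NA * A * NA) := by simp only [Matrix.mul_assoc]
    _ = A * NA := by rw [hNA2]
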